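/- Let κ ≥ 0, Λ > 0, λ > 0, θ ∈ ℝ, and let V be the set of continuously differentiable functions φ : [−1,1] → ℝ with φ(−1) = φ(1) = 0. Define m(θ) = inf_{φ∈V} [ (κ/2)∫_{−1}^{1}(φ² + Λ²·(φ′)²) dr + ∫_{−1}^{1} √(φ² + λ²·(φ′)²) dr − θ∫_{−1}^{1} φ dr ] and m̃(θ) = inf_{φ∈V} [ ∫_{−1}^{1} √(φ² + λ²·(φ′)²) dr − θ∫_{−1}^{1} φ dr ]. Then m(θ) < 0 if and only if m̃(θ) < 0. -/

import Mathlib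

/-- The set `V` of admissible test functions: C¹ functions on `[−1,1]`
vanishing at `±1`. -/
def V : Set (ℝ → ℝ) := {φ | ContDiff ℝ 1 φ ∧ φ (-1) = 0 ∧ φ 1 = 0}

/-- The functional `Φ_θ(φ) = E(φ) + Ψ_λ(φ) − θ∫φ`, with renormalized plastic free
energy `E(φ) = (κ/2)∫(φ² + Λ²(φ')²)` and dissipation `Ψ_λ(φ) = ∫√(φ² + λ²(φ')²)`. -/
noncomputable def Phi (κ Λ lam θ : ℝ) (φ : ℝ → ℝ) : ℝ :=
  (κ / 2) * (∫ r in (-1 : ℝ)..1, ((φ r) ^ 2 + Λ ^ 2 * (deriv φ r) ^ 2))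
    + (∫ r in (-1 : ℝ)..1, Real.sqrt ((φ r) ^ 2 + lam ^ 2 * (deriv φ r) ^ 2))
    - θ * ∫ r in (-1 : ℝ)..1, φ r

/-- The reduced functional `Φ̃_θ(φ) = Ψ_λ(φ) − θ∫φ`. -/
noncomputable def PhiTilde (lam θ : ℝ) (φ : ℝ → ℝ) : ℝ :=
  (∫ r in (-1 : ℝ)..1, Real.sqrt ((φ r) ^ 2 + lam ^ 2 * (deriv φ r) ^ 2))
    - θ * ∫ r in (-1 : ℝ)..1, φ r

/-- The stability indicator `m(θ) = inf_{φ ∈ V} Φ_θ(φ)` (valued in `EReal`, since the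
infimum may a priori be `−∞`). -/
noncomputable def m (κ Λ lam θ : ℝ) : EReal :=
  ⨅ φ : V, ((Phi κ Λ lam θ φ.1 : ℝ) : EReal)

/-- The reduced stability indicator `m̃(θ) = inf_{φ ∈ V} Φ̃_θ(φ)`. -/
noncomputable def mTilde (lam θ : ℝ) : EReal :=
  ⨅ φ : V, ((PhiTilde lam θ φ.1 : ℝ) : EReal)

lemma mTilde_lt_zero_iff (lam θ : ℝ) :
    mTilde lam θ < 0 ↔ ∃ φ : V, ((PhiTilde lam θ φ.1 : ℝ) : EReal) < 0 := by
  rw [mTilde, iInf_lt_iff]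

/-- Proposition 3.5 of the paper: the stability indicator is negative if and only if the
reduced stability indicator is negative. -/
theorem stability_indicator_equiv (κ Λ lam θ : ℝ)
    (hκ : 0 ≤ κ) (hΛ : 0 < Λ) (hlam : 0 < lam) :
    m κ Λ lam θ < 0 ↔ mTilde lam θ < 0 := by
  constructor
  · intro hm
    rw [mTilde_lt_zero_iff] at *
    rw [m] at hm
    rw [iInf_lt_iff] at hm
    obtain ⟨⟨φ, hφ⟩, hlt⟩ := hm
    refine ⟨⟨φ, hφ⟩, lt_of_le_of_lt ?_ hlt⟩
    have hA : 0 ≤ ∫ r in (-1 : ℝ)..1, ((φ r) ^ 2 + Λ ^ 2 * (deriv φ r) ^ 2) := by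
      apply intervalIntegral.integral_nonneg (by norm_num)
      intro u _
      positivity
    have : PhiTilde lam θ φ ≤ Phi κ Λ lam θ φ := by
      unfold Phi PhiTilde
      have : 0 ≤ (κ / 2) * (∫ r in (-1 : ℝ)..1, ((φ r) ^ 2 + Λ ^ 2 * (deriv φ r) ^ 2)) := by
        positivity
      linarith
    exact_mod_cast this
  · intro hm
    rw [mTilde_lt_zero_iff] at hm
    obtain ⟨⟨φ, hφ⟩, hlt⟩ := hm
    have hc : PhiTilde lam θ φ < 0 := by exact_mod_cast hlt
    set c := PhiTilde lam θ φ with hcdef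
    set E : ℝ := (κ / 2) * (∫ r in (-1 : ℝ)..1, ((φ r) ^ 2 + Λ ^ 2 * (deriv φ r) ^ 2)) with hEdef
    have hE : 0 ≤ E := by
      have hA : 0 ≤ ∫ r in (-1 : ℝ)..1, ((φ r) ^ 2 + Λ ^ 2 * (deriv φ r) ^ 2) := by
        apply intervalIntegral.integral_nonneg (by norm_num)
        intro u _
        positivity
      positivity
    set t : ℝ := -c / (2 * (E + 1)) with htdef
    have ht : 0 < t := by
      apply div_pos (by linarith)
      linarith
    have hdφ : Differentiable ℝ φ := hφ.1.differentiable one_ne_zero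
    have hderiv : ∀ r, deriv (fun x => t * φ x) r = t * deriv φ r := by
      intro r
      exact deriv_const_mul t (hdφ r)
    have hmem : (fun x => t * φ x) ∈ V := by
      refine ⟨contDiff_const.mul hφ.1, ?_, ?_⟩
      · simp [hφ.2.1]
      · simp [hφ.2.2]
    have hPhi : Phi κ Λ lam θ (fun x => t * φ x) = t ^ 2 * E + t * c := by
      unfold Phi
      have h1 : (∫ r in (-1 : ℝ)..1,
          (((fun x => t * φ x) r) ^ 2 + Λ ^ 2 * (deriv (fun x => t * φ x) r) ^ 2))
          = t ^ 2 * ∫ r in (-1 : ℝ)..1, ((φ r) ^ 2 + Λ ^ 2 * (deriv φ r) ^ 2) := by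
        rw [← intervalIntegral.integral_const_mul]
        apply intervalIntegral.integral_congr
        intro r _
        simp only [hderiv]
        ring
      have h2 : (∫ r in (-1 : ℝ)..1,
          Real.sqrt (((fun x => t * φ x) r) ^ 2 + lam ^ 2 * (deriv (fun x => t * φ x) r) ^ 2))
          = t * ∫ r in (-1 : ℝ)..1, Real.sqrt ((φ r) ^ 2 + lam ^ 2 * (deriv φ r) ^ 2) := by
        rw [← intervalIntegral.integral_const_mul]
        apply intervalIntegral.integral_congr
        intro r _
        simp only [hderiv]
        have : (t * φ r) ^ 2 + lam ^ 2 * (t * deriv φ r) ^ 2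
            = t ^ 2 * ((φ r) ^ 2 + lam ^ 2 * (deriv φ r) ^ 2) := by ring
        rw [this, Real.sqrt_mul (by positivity), Real.sqrt_sq ht.le]
      have h3 : (∫ r in (-1 : ℝ)..1, (fun x => t * φ x) r)
          = t * ∫ r in (-1 : ℝ)..1, φ r := by
        rw [← intervalIntegral.integral_const_mul]
      rw [h1, h2, h3, hcdef, hEdef]
      unfold PhiTilde
      ring
    have hneg : Phi κ Λ lam θ (fun x => t * φ x) < 0 := by
      rw [hPhi]
      have htE : t * E + c < 0 := by
        have : t * E ≤ (-c) / 2 := by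
          rw [htdef]
          rw [div_mul_eq_mul_div, div_le_div_iff₀ (by linarith) (by norm_num)]
          nlinarith
        linarith
      calc t ^ 2 * E + t * c = t * (t * E + c) := by ring
        _ < 0 := mul_neg_of_pos_of_neg ht htE
    rw [m, iInf_lt_iff]
    refine ⟨⟨_, hmem⟩, ?_⟩
    exact_mod_cast hneg
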